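/- The identity e^{-(x+y)²/(2t)}/√(2πt) = ∫₀ᵗ (x/√(2πs³)) e^{-x²/(2s)} · e^{-y²/(2(t-s))}/√(2π(t-s)) ds holds for all x, y > 0 and t > 0. -/

import Mathlib

open Real MeasureTheory intervalIntegral Filter Set Topology

noncomputable def heatPhi (z : ℝ) : ℝ := ∫ u in (0:ℝ)..z, Real.exp (-u^2/2)

lemma heat_gauss_eq : (fun u : ℝ => Real.exp (-u^2/2)) = fun u => Real.exp (-(1/2:ℝ) * u^2) := by
  funext u; ring_nf

lemma heat_gauss_integrable : MeasureTheory.Integrable (fun u : ℝ => Real.exp (-u^2/2)) := by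
  rw [heat_gauss_eq]; exact integrable_exp_neg_mul_sq (by norm_num)

lemma heat_gauss_continuous : Continuous (fun u : ℝ => Real.exp (-u^2/2)) := by
  continuity

lemma heatPhi_hasDerivAt (z : ℝ) : HasDerivAt heatPhi (Real.exp (-z^2/2)) z :=
  intervalIntegral.integral_hasDerivAt_right heat_gauss_integrable.intervalIntegrable
    (heat_gauss_continuous.stronglyMeasurableAtFilter _ _)
    heat_gauss_continuous.continuousAt

lemma heat_gauss_Ioi : ∫ u in Ioi (0:ℝ), Real.exp (-u^2/2) = Real.sqrt (2*π) / 2 := by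
  rw [heat_gauss_eq, integral_gaussian_Ioi]
  norm_num [mul_comm]

lemma heatPhi_tendsto_atTop : Tendsto heatPhi atTop (𝓝 (Real.sqrt (2*π) / 2)) := by
  rw [← heat_gauss_Ioi]
  exact intervalIntegral_tendsto_integral_Ioi _ heat_gauss_integrable.integrableOn tendsto_id

lemma heatPhi_tendsto_atBot : Tendsto heatPhi atBot (𝓝 (-(Real.sqrt (2*π) / 2))) := by
  have h1 : ∫ u in Iic (0:ℝ), Real.exp (-u^2/2) = Real.sqrt (2*π) / 2 := by
    rw [← neg_zero, ← integral_comp_neg_Ioi]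
    simpa using heat_gauss_Ioi
  have h2 : Tendsto (fun z : ℝ => ∫ u in z..(0:ℝ), Real.exp (-u^2/2)) atBot
      (𝓝 (Real.sqrt (2*π) / 2)) := by
    rw [← h1]
    exact intervalIntegral_tendsto_integral_Iic _ heat_gauss_integrable.integrableOn tendsto_id
  have := h2.neg
  refine this.congr (fun z => ?_)
  rw [intervalIntegral.integral_symm, neg_neg]
  rfl

/-- The key algebraic identity for the sum of the two derivative terms. -/
lemma heat_key (x y t s Q : ℝ) (hQ : Q ≠ 0) (hs : s ≠ 0)
    (hQ2 : Q^2 = t*s*(t-s)) :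
    -((-(x+y) * Q - (x*t - (x+y)*s) * (t*(t-2*s)/(2*Q))) / Q^2)
    - ((-(x-y) * Q - (x*t - (x-y)*s) * (t*(t-2*s)/(2*Q))) / Q^2)
    = x*t/(s*Q) := by
  field_simp
  linear_combination (4*x*s - 2*x*t)*hQ2

theorem heat_kernel_first_passage_convolution
    (x y t : ℝ) (hx : 0 < x) (hy : 0 < y) (ht : 0 < t) :
    Real.exp (-(x + y)^2 / (2*t)) / Real.sqrt (2 * π * t) =
      ∫ s in (0:ℝ)..t,
        (x / Real.sqrt (2 * π * s^3)) * Real.exp (-x^2 / (2*s)) *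
          (Real.exp (-y^2 / (2*(t - s))) / Real.sqrt (2 * π * (t - s))) := by
  have hxt : 0 < x * t := mul_pos hx ht
  set R : ℝ := Real.sqrt (2*π) with hRdef
  have hRpos : 0 < R := Real.sqrt_pos.2 (by positivity)
  have hR2 : R^2 = 2*π := Real.sq_sqrt (by positivity)
  set f : ℝ → ℝ := fun s =>
    (x / Real.sqrt (2 * π * s^3)) * Real.exp (-x^2 / (2*s)) *
      (Real.exp (-y^2 / (2*(t - s))) / Real.sqrt (2 * π * (t - s))) with hfdef
  set A : ℝ := Real.exp (-(x+y)^2/(2*t)) / (2*π*Real.sqrt t) with hAdef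
  set B : ℝ := Real.exp (-(x-y)^2/(2*t)) / (2*π*Real.sqrt t) with hBdef
  set F : ℝ → ℝ := fun s =>
    A * heatPhi (-((x*t - (x+y)*s) / Real.sqrt (t*s*(t-s))))
    + B * heatPhi (-((x*t - (x-y)*s) / Real.sqrt (t*s*(t-s)))) with hFdef
  -- positivity
  have hppos : ∀ s ∈ Set.Ioo (0:ℝ) t, 0 < t*s*(t-s) := by
    intro s hs
    have h1 := hs.1; have h2 := sub_pos.2 hs.2
    positivity
  -- derivative of the inner function
  have hderiv_g : ∀ c : ℝ, ∀ s ∈ Set.Ioo (0:ℝ) t,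
      HasDerivAt (fun u => (x*t - c*u) / Real.sqrt (t*u*(t-u)))
        ((-c * Real.sqrt (t*s*(t-s)) - (x*t - c*s) * (t*(t-2*s) / (2 * Real.sqrt (t*s*(t-s)))))
          / Real.sqrt (t*s*(t-s)) ^ 2) s := by
    intro c s hs
    have hp : 0 < t*s*(t-s) := hppos s hs
    have hnum : HasDerivAt (fun u : ℝ => x*t - c*u) (-c) s := by
      exact ((hasDerivAt_const s (x*t)).sub ((hasDerivAt_id s).const_mul c)).congr_deriv (by simp)
    have hpder : HasDerivAt (fun u : ℝ => t*u*(t-u)) (t*(t-2*s)) s := by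
      have h := ((hasDerivAt_id s).const_mul t).mul ((hasDerivAt_const s t).sub (hasDerivAt_id s))
      refine h.congr_deriv ?_
      simp [id]
      ring
    have hqder := hpder.sqrt hp.ne'
    exact hnum.div hqder (by positivity)
  -- derivative of `heatPhi` composed with the inner functions
  have hPhiDeriv : ∀ c : ℝ, ∀ s ∈ Set.Ioo (0:ℝ) t,
      HasDerivAt (fun u => heatPhi (-((x*t - c*u) / Real.sqrt (t*u*(t-u)))))
        (Real.exp (-((x*t - c*s) / Real.sqrt (t*s*(t-s)))^2/2) *
          (-((-c * Real.sqrt (t*s*(t-s)) - (x*t - c*s) * (t*(t-2*s) / (2 * Real.sqrt (t*s*(t-s)))))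
          / Real.sqrt (t*s*(t-s)) ^ 2))) s := by
    intro c s hs
    have h := (heatPhi_hasDerivAt (-((x*t - c*s) / Real.sqrt (t*s*(t-s))))).comp s
      (hderiv_g c s hs).neg
    simp only [neg_sq] at h
    exact h
  -- F has derivative f on the open interval
  have hFderiv : ∀ s ∈ Set.Ioo (0:ℝ) t, HasDerivAt F (f s) s := by
    intro s hs
    obtain ⟨hs0, hst⟩ := hs
    have hts : 0 < t - s := sub_pos.2 hst
    have hp : 0 < t*s*(t-s) := hppos s ⟨hs0, hst⟩
    have hQpos : 0 < Real.sqrt (t*s*(t-s)) := Real.sqrt_pos.2 hp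
    have h1 := (hPhiDeriv (x+y) s ⟨hs0, hst⟩).const_mul A
    have h2 := (hPhiDeriv (x-y) s ⟨hs0, hst⟩).const_mul B
    have hsum := h1.add h2
    refine hsum.congr_deriv ?_
    symm
    -- now the pointwise algebraic identity
    set Q : ℝ := Real.sqrt (t*s*(t-s)) with hQdef
    have hQ2 : Q^2 = t*s*(t-s) := Real.sq_sqrt hp.le
    set G1 : ℝ := (-(x+y) * Q - (x*t - (x+y)*s) * (t*(t-2*s)/(2*Q))) / Q^2 with hG1def
    set G2 : ℝ := (-(x-y) * Q - (x*t - (x-y)*s) * (t*(t-2*s)/(2*Q))) / Q^2 with hG2def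
    have hkey := heat_key x y t s Q hQpos.ne' hs0.ne' hQ2
    -- exponential splitting
    have hexp1 : Real.exp (-((x*t - (x+y)*s) / Q)^2/2)
        = Real.exp ((x+y)^2/(2*t)) * (Real.exp (-x^2/(2*s)) * Real.exp (-y^2/(2*(t-s)))) := by
      rw [← Real.exp_add, ← Real.exp_add]
      congr 1
      rw [div_pow, hQ2]
      field_simp
      ring
    have hexp2 : Real.exp (-((x*t - (x-y)*s) / Q)^2/2)
        = Real.exp ((x-y)^2/(2*t)) * (Real.exp (-x^2/(2*s)) * Real.exp (-y^2/(2*(t-s)))) := by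
      rw [← Real.exp_add, ← Real.exp_add]
      congr 1
      rw [div_pow, hQ2]
      field_simp
      ring
    have hc1 : Real.exp (-(x+y)^2/(2*t)) * Real.exp ((x+y)^2/(2*t)) = 1 := by
      rw [← Real.exp_add, neg_div, neg_add_cancel, Real.exp_zero]
    have hc2 : Real.exp (-(x-y)^2/(2*t)) * Real.exp ((x-y)^2/(2*t)) = 1 := by
      rw [← Real.exp_add, neg_div, neg_add_cancel, Real.exp_zero]
    set E : ℝ := Real.exp (-x^2/(2*s)) with hEdef
    set E' : ℝ := Real.exp (-y^2/(2*(t-s))) with hE'def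
    have t1 : A * (Real.exp ((x+y)^2/(2*t)) * (E * E') * -G1)
        = E * E' * (-G1 / (2*π*Real.sqrt t)) := by
      rw [hAdef, show Real.exp (-(x+y)^2/(2*t)) / (2*π*Real.sqrt t) *
          (Real.exp ((x+y)^2/(2*t)) * (E * E') * -G1)
        = (Real.exp (-(x+y)^2/(2*t)) * Real.exp ((x+y)^2/(2*t)))
            * (E * E' * (-G1 / (2*π*Real.sqrt t))) by ring, hc1, one_mul]
    have t2 : B * (Real.exp ((x-y)^2/(2*t)) * (E * E') * -G2)
        = E * E' * (-G2 / (2*π*Real.sqrt t)) := by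
      rw [hBdef, show Real.exp (-(x-y)^2/(2*t)) / (2*π*Real.sqrt t) *
          (Real.exp ((x-y)^2/(2*t)) * (E * E') * -G2)
        = (Real.exp (-(x-y)^2/(2*t)) * Real.exp ((x-y)^2/(2*t)))
            * (E * E' * (-G2 / (2*π*Real.sqrt t))) by ring, hc2, one_mul]
    have step1 : A * (Real.exp (-((x*t - (x+y)*s) / Q)^2/2) * -G1)
        + B * (Real.exp (-((x*t - (x-y)*s) / Q)^2/2) * -G2)
        = (E * E') * ((-G1 - G2) / (2*π*Real.sqrt t)) := by
      rw [hexp1, hexp2, t1, t2]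
      ring
    rw [step1, hkey]
    -- final sqrt algebra
    have haa : Real.sqrt s ^ 2 = s := Real.sq_sqrt hs0.le
    have hbb : Real.sqrt (t-s) ^ 2 = t - s := Real.sq_sqrt hts.le
    have hcc : Real.sqrt t ^ 2 = t := Real.sq_sqrt ht.le
    set a : ℝ := Real.sqrt s with hadef
    set b : ℝ := Real.sqrt (t-s) with hbdef
    set cc : ℝ := Real.sqrt t with hccdef
    have hsa : a ≠ 0 := by rw [hadef]; positivity
    have hsb : b ≠ 0 := by rw [hbdef]; positivity
    have hsc : cc ≠ 0 := by rw [hccdef]; positivity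
    have hQab : Q = cc * a * b := by
      rw [hQdef, Real.sqrt_mul (by positivity), Real.sqrt_mul ht.le]
    have hs3 : Real.sqrt (2*π*s^3) = R * a ^ 3 := by
      have h6 : (a ^ 3)^2 = s^3 := by
        rw [show (a ^ 3)^2 = (a^2)^3 by ring, haa]
      rw [show 2*π*s^3 = (2*π) * s^3 by ring, Real.sqrt_mul (by positivity), hRdef, ← h6,
        Real.sqrt_sq (by rw [hadef]; positivity)]
    have hts3 : Real.sqrt (2*π*(t-s)) = R * b := by
      rw [show 2*π*(t-s) = (2*π) * (t-s) by ring, Real.sqrt_mul (by positivity), hRdef, hbdef]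
    have hfs : f s = x / (R * a ^ 3) * E * (E' / (R * b)) := by
      rw [hfdef]
      simp only
      rw [hs3, hts3, hEdef, hE'def]
    rw [hfs, hQab]
    have h2pi : (2:ℝ)*π = R^2 := hR2.symm
    rw [h2pi, ← hcc, ← haa]
    field_simp
  -- limits of the inner functions at the endpoints
  have hq0 : Tendsto (fun s : ℝ => Real.sqrt (t*s*(t-s))) (𝓝[>] (0:ℝ)) (𝓝[>] 0) := by
    rw [tendsto_nhdsWithin_iff]
    constructor
    · have hcont : Continuous fun s : ℝ => Real.sqrt (t*s*(t-s)) := by fun_prop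
      exact Tendsto.mono_left (by simpa using hcont.tendsto 0) nhdsWithin_le_nhds
    · filter_upwards [Ioo_mem_nhdsGT_of_mem (⟨le_refl (0:ℝ), ht⟩ : (0:ℝ) ∈ Ico (0:ℝ) t)]
        with s hs
      exact Real.sqrt_pos.2 (hppos s hs)
  have hqt : Tendsto (fun s : ℝ => Real.sqrt (t*s*(t-s))) (𝓝[<] t) (𝓝[>] 0) := by
    rw [tendsto_nhdsWithin_iff]
    constructor
    · have hcont : Continuous fun s : ℝ => Real.sqrt (t*s*(t-s)) := by fun_prop
      exact Tendsto.mono_left (by simpa using hcont.tendsto t) nhdsWithin_le_nhds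
    · filter_upwards [Ioo_mem_nhdsLT_of_mem (⟨ht, le_refl t⟩ : t ∈ Ioc (0:ℝ) t)] with s hs
      exact Real.sqrt_pos.2 (hppos s hs)
  have hinv0 : Tendsto (fun s : ℝ => (Real.sqrt (t*s*(t-s)))⁻¹) (𝓝[>] (0:ℝ)) atTop :=
    tendsto_inv_nhdsGT_zero.comp hq0
  have hinvt : Tendsto (fun s : ℝ => (Real.sqrt (t*s*(t-s)))⁻¹) (𝓝[<] t) atTop :=
    tendsto_inv_nhdsGT_zero.comp hqt
  have hnum : ∀ (c u : ℝ) (l : Filter ℝ), l ≤ 𝓝 u →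
      Tendsto (fun s : ℝ => x*t - c*s) l (𝓝 (x*t - c*u)) := by
    intro c u l hl
    exact ((continuous_const.sub (continuous_const.mul continuous_id)).tendsto u).mono_left hl
  have hg1_0 : Tendsto (fun s : ℝ => (x*t - (x+y)*s) / Real.sqrt (t*s*(t-s)))
      (𝓝[>] (0:ℝ)) atTop := by
    have h' : Tendsto (fun s : ℝ => x*t - (x+y)*s) (𝓝[>] (0:ℝ)) (𝓝 (x*t)) := by
      simpa using hnum (x+y) 0 _ nhdsWithin_le_nhds
    exact (h'.pos_mul_atTop hxt hinv0).congr fun s => (div_eq_mul_inv _ _).symm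
  have hg2_0 : Tendsto (fun s : ℝ => (x*t - (x-y)*s) / Real.sqrt (t*s*(t-s)))
      (𝓝[>] (0:ℝ)) atTop := by
    have h' : Tendsto (fun s : ℝ => x*t - (x-y)*s) (𝓝[>] (0:ℝ)) (𝓝 (x*t)) := by
      simpa using hnum (x-y) 0 _ nhdsWithin_le_nhds
    exact (h'.pos_mul_atTop hxt hinv0).congr fun s => (div_eq_mul_inv _ _).symm
  have hg1_t : Tendsto (fun s : ℝ => (x*t - (x+y)*s) / Real.sqrt (t*s*(t-s)))
      (𝓝[<] t) atBot := by
    have h' : Tendsto (fun s : ℝ => x*t - (x+y)*s) (𝓝[<] t) (𝓝 (x*t - (x+y)*t)) :=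
      hnum (x+y) t _ nhdsWithin_le_nhds
    have hneg : x*t - (x+y)*t < 0 := by nlinarith
    exact (h'.neg_mul_atTop hneg hinvt).congr fun s => (div_eq_mul_inv _ _).symm
  have hg2_t : Tendsto (fun s : ℝ => (x*t - (x-y)*s) / Real.sqrt (t*s*(t-s)))
      (𝓝[<] t) atTop := by
    have h' : Tendsto (fun s : ℝ => x*t - (x-y)*s) (𝓝[<] t) (𝓝 (x*t - (x-y)*t)) :=
      hnum (x-y) t _ nhdsWithin_le_nhds
    have hpos : 0 < x*t - (x-y)*t := by nlinarith
    exact (h'.pos_mul_atTop hpos hinvt).congr fun s => (div_eq_mul_inv _ _).symm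
  -- limits of F at the endpoints
  have hF0 : Tendsto F (𝓝[>] (0:ℝ))
      (𝓝 (A * (-(Real.sqrt (2*π)/2)) + B * (-(Real.sqrt (2*π)/2)))) := by
    have p1 := heatPhi_tendsto_atBot.comp (tendsto_neg_atTop_atBot.comp hg1_0)
    have p2 := heatPhi_tendsto_atBot.comp (tendsto_neg_atTop_atBot.comp hg2_0)
    have h := (p1.const_mul A).add (p2.const_mul B)
    rw [hFdef]
    exact h
  have hFt : Tendsto F (𝓝[<] t)
      (𝓝 (A * (Real.sqrt (2*π)/2) + B * (-(Real.sqrt (2*π)/2)))) := by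
    have p1 := heatPhi_tendsto_atTop.comp (tendsto_neg_atBot_atTop.comp hg1_t)
    have p2 := heatPhi_tendsto_atBot.comp (tendsto_neg_atTop_atBot.comp hg2_t)
    have h := (p1.const_mul A).add (p2.const_mul B)
    rw [hFdef]
    exact h
  -- continuity components of f
  have hf1cont : ∀ s : ℝ, 0 < s →
      ContinuousAt (fun u : ℝ => x / Real.sqrt (2*π*u^3) * Real.exp (-x^2/(2*u))) s := by
    intro s hs
    have h1 : Real.sqrt (2*π*s^3) ≠ 0 := by positivity
    have h2 : (2:ℝ)*s ≠ 0 := by positivity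
    have hc1 : Continuous fun u : ℝ => Real.sqrt (2*π*u^3) := by fun_prop
    have hc2 : Continuous fun u : ℝ => (2:ℝ)*u := by fun_prop
    have hd1 : ContinuousAt (fun u : ℝ => x / Real.sqrt (2*π*u^3)) s :=
      continuousAt_const.div hc1.continuousAt h1
    have hd2 : ContinuousAt (fun u : ℝ => Real.exp (-x^2/(2*u))) s :=
      (continuousAt_const.div hc2.continuousAt h2).rexp
    exact hd1.mul hd2
  have hf2cont : ∀ s : ℝ, s < t →
      ContinuousAt (fun u : ℝ => Real.exp (-y^2/(2*(t-u))) / Real.sqrt (2*π*(t-u))) s := by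
    intro s hs
    have h1 : Real.sqrt (2*π*(t-s)) ≠ 0 := by
      have : 0 < t - s := sub_pos.2 hs
      positivity
    have h2 : (2:ℝ)*(t-s) ≠ 0 := by
      have : 0 < t - s := sub_pos.2 hs
      positivity
    have hc1 : Continuous fun u : ℝ => Real.sqrt (2*π*(t-u)) := by fun_prop
    have hc2 : Continuous fun u : ℝ => (2:ℝ)*(t-u) := by fun_prop
    have hd2 : ContinuousAt (fun u : ℝ => Real.exp (-y^2/(2*(t-u)))) s :=
      (continuousAt_const.div hc2.continuousAt h2).rexp
    exact hd2.div hc1.continuousAt h1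
  -- limit of the first factor at 0⁺
  have hlim1 : Tendsto (fun u : ℝ => x / Real.sqrt (2*π*u^3) * Real.exp (-x^2/(2*u)))
      (𝓝[>] (0:ℝ)) (𝓝 0) := by
    have base := tendsto_rpow_mul_exp_neg_mul_atTop_nhds_zero ((3:ℝ)/2) (x^2/2) (by positivity)
    have hmul : Tendsto (fun u : ℝ => x / R * ((u⁻¹) ^ ((3:ℝ)/2) * Real.exp (-(x^2/2) * u⁻¹)))
        (𝓝[>] (0:ℝ)) (𝓝 (x / R * 0)) :=
      (base.comp tendsto_inv_nhdsGT_zero).const_mul _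
    rw [mul_zero] at hmul
    refine hmul.congr' ?_
    filter_upwards [self_mem_nhdsWithin] with u hu
    have hu0 : (0:ℝ) < u := hu
    have h1 : Real.sqrt (2*π*u^3) = R * u ^ ((3:ℝ)/2) := by
      rw [show 2*π*u^3 = (2*π)*u^3 by ring, Real.sqrt_mul (by positivity), hRdef]
      congr 1
      rw [Real.sqrt_eq_rpow, ← Real.rpow_natCast u 3, ← Real.rpow_mul hu0.le]
      norm_num
    have h2 : (u⁻¹) ^ ((3:ℝ)/2) = (u ^ ((3:ℝ)/2))⁻¹ := Real.inv_rpow hu0.le _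
    have h3 : Real.exp (-x^2/(2*u)) = Real.exp (-(x^2/2) * u⁻¹) := by
      congr 1
      field_simp
    have hS : u ^ ((3:ℝ)/2) ≠ 0 := by positivity
    rw [h2, h3, h1]
    field_simp
  -- limit of the second factor at t⁻
  have hlim2 : Tendsto (fun u : ℝ => Real.exp (-y^2/(2*(t-u))) / Real.sqrt (2*π*(t-u)))
      (𝓝[<] t) (𝓝 0) := by
    have base := tendsto_rpow_mul_exp_neg_mul_atTop_nhds_zero ((1:ℝ)/2) (y^2/2) (by positivity)
    have hsub : Tendsto (fun u : ℝ => t - u) (𝓝[<] t) (𝓝[>] 0) := by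
      rw [tendsto_nhdsWithin_iff]
      constructor
      · have hc : Continuous fun u : ℝ => t - u := by fun_prop
        exact Tendsto.mono_left (by simpa using hc.tendsto t) nhdsWithin_le_nhds
      · filter_upwards [self_mem_nhdsWithin] with u hu
        exact sub_pos.2 (mem_Iio.mp hu)
    have hmul : Tendsto
        (fun u : ℝ => (1 / R) * (((t-u)⁻¹) ^ ((1:ℝ)/2) * Real.exp (-(y^2/2) * (t-u)⁻¹)))
        (𝓝[<] t) (𝓝 (1 / R * 0)) :=
      (base.comp (tendsto_inv_nhdsGT_zero.comp hsub)).const_mul _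
    rw [mul_zero] at hmul
    refine hmul.congr' ?_
    filter_upwards [self_mem_nhdsWithin] with u hu
    have hu0 : (0:ℝ) < t - u := sub_pos.2 hu
    have h1 : Real.sqrt (2*π*(t-u)) = R * (t-u) ^ ((1:ℝ)/2) := by
      rw [show 2*π*(t-u) = (2*π)*(t-u) by ring, Real.sqrt_mul (by positivity), hRdef]
      congr 1
      exact Real.sqrt_eq_rpow _
    have h2 : ((t-u)⁻¹) ^ ((1:ℝ)/2) = ((t-u) ^ ((1:ℝ)/2))⁻¹ := Real.inv_rpow hu0.le _
    have h3 : Real.exp (-y^2/(2*(t-u))) = Real.exp (-(y^2/2) * (t-u)⁻¹) := by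
      congr 1
      field_simp
    have hS : (t-u) ^ ((1:ℝ)/2) ≠ 0 := by positivity
    rw [h2, h3, h1]
    field_simp
  -- continuity of f on [0, t]
  have hcontf : ContinuousOn f (Icc 0 t) := by
    intro s hs
    rcases eq_or_lt_of_le hs.1 with h0 | h0
    · -- s = 0
      have hf0 : f 0 = 0 := by
        rw [hfdef]
        norm_num
      have h2c := ((hf2cont 0 ht).tendsto).mono_left (nhdsWithin_le_nhds (s := Ioi (0:ℝ)))
      have hprod := hlim1.mul h2c
      rw [zero_mul] at hprod
      have hcw : ContinuousWithinAt f (Icc 0 t) 0 := by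
        rw [← continuousWithinAt_diff_self]
        show Tendsto f (𝓝[Icc 0 t \ {0}] 0) (𝓝 (f 0))
        rw [hf0]
        refine hprod.mono_left (nhdsWithin_mono _ ?_)
        intro u hu
        exact lt_of_le_of_ne hu.1.1 (Ne.symm hu.2)
      exact h0 ▸ hcw
    rcases eq_or_lt_of_le hs.2 with h1 | h1
    · -- s = t
      have hft : f t = 0 := by
        rw [hfdef]
        simp
      have h1c := ((hf1cont t ht).tendsto).mono_left (nhdsWithin_le_nhds (s := Iio t))
      have hprod := h1c.mul hlim2
      rw [mul_zero] at hprod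
      have hcw : ContinuousWithinAt f (Icc 0 t) t := by
        rw [← continuousWithinAt_diff_self]
        show Tendsto f (𝓝[Icc 0 t \ {t}] t) (𝓝 (f t))
        rw [hft]
        refine hprod.mono_left (nhdsWithin_mono _ ?_)
        intro u hu
        exact lt_of_le_of_ne hu.1.2 hu.2
      exact h1 ▸ hcw
    · exact ((hf1cont s h0).mul (hf2cont s h1)).continuousWithinAt
  have hint : IntervalIntegrable f volume 0 t := by
    apply ContinuousOn.intervalIntegrable
    rwa [uIcc_of_le ht.le]
  -- fundamental theorem of calculus
  have hFTC := intervalIntegral.integral_eq_sub_of_hasDerivAt_of_tendsto ht hFderiv hint hF0 hFt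
  rw [hFTC]
  have hcomb : A * (Real.sqrt (2*π)/2) + B * (-(Real.sqrt (2*π)/2))
      - (A * (-(Real.sqrt (2*π)/2)) + B * (-(Real.sqrt (2*π)/2))) = A * R := by
    rw [hRdef]
    ring
  rw [hcomb, hAdef]
  have hsq : Real.sqrt (2*π*t) = R * Real.sqrt t := by
    rw [show 2*π*t = (2*π)*t by ring, Real.sqrt_mul (by positivity), hRdef]
  rw [hsq, show (2:ℝ)*π = R^2 from hR2.symm]
  have hsc : Real.sqrt t ≠ 0 := by positivity
  field_simp
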